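/- If Φ, Ψ ∈ S_p* for some p ≥ 0, then their convolution Φ∗Ψ, defined by (Φ∗Ψ)^(σ) = Φ̂(σ)·Ψ̂(σ), belongs to S_{2p}*, with ‖Φ∗Ψ‖_{-2p}² ≤ ‖Φ‖_{-p}² ‖Ψ‖_{-p}². -/

import Mathlib

open scoped BigOperators

/-- `lam σ = ∏_{k∈σ} (1+k)`. -/
noncomputable def lam (σ : Finset ℕ) : ℝ := ∏ k ∈ σ, (1 + k : ℝ)

lemma lam_pos (σ : Finset ℕ) : 0 < lam σ := by
  apply Finset.prod_pos; intro k _; positivity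

lemma term_eq (p : ℝ) (a b : Finset ℕ → ℂ) (σ : Finset ℕ) :
    lam σ ^ (-(2 * (2 * p))) * ‖a σ * b σ‖ ^ 2 =
      (lam σ ^ (-(2 * p)) * ‖a σ‖ ^ 2) * (lam σ ^ (-(2 * p)) * ‖b σ‖ ^ 2) := by
  have h : lam σ ^ (-(2 * (2 * p))) = lam σ ^ (-(2 * p)) * lam σ ^ (-(2 * p)) := by
    rw [← Real.rpow_add (lam_pos σ)]; ring_nf
  rw [h, norm_mul, mul_pow]; ring

/-- **The convolution maps `S_p* × S_p*` to `S_{2p}*.`** Represent `Φ, Ψ ∈ S_p*` by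
their Fock transforms `a = Φ̂`, `b = Ψ̂`, so that `‖Φ‖_{-p}² = ∑_σ λ_σ^{-2p}|a σ|² < ∞`.
The convolution has Fock transform `(Φ∗Ψ)^(σ) = a(σ)·b(σ)`. Then `Φ∗Ψ ∈ S_{2p}*` with
`‖Φ∗Ψ‖_{-2p}² ≤ ‖Φ‖_{-p}² ‖Ψ‖_{-p}²`. -/
theorem stmt18 (p : ℝ) (hp : 0 ≤ p) (a b : Finset ℕ → ℂ)
    (ha : Summable (fun σ : Finset ℕ => lam σ ^ (-(2 * p)) * ‖a σ‖ ^ 2))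
    (hb : Summable (fun σ : Finset ℕ => lam σ ^ (-(2 * p)) * ‖b σ‖ ^ 2)) :
    Summable (fun σ : Finset ℕ => lam σ ^ (-(2 * (2 * p))) * ‖a σ * b σ‖ ^ 2) ∧
    (∑' σ : Finset ℕ, lam σ ^ (-(2 * (2 * p))) * ‖a σ * b σ‖ ^ 2) ≤
      (∑' σ : Finset ℕ, lam σ ^ (-(2 * p)) * ‖a σ‖ ^ 2) *
        (∑' σ : Finset ℕ, lam σ ^ (-(2 * p)) * ‖b σ‖ ^ 2) := by
  set f := fun σ : Finset ℕ => lam σ ^ (-(2 * p)) * ‖a σ‖ ^ 2 with hf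
  set g := fun σ : Finset ℕ => lam σ ^ (-(2 * p)) * ‖b σ‖ ^ 2 with hg
  have hfnn : ∀ σ, 0 ≤ f σ := fun σ => by
    have := (lam_pos σ).le; positivity
  have hgnn : ∀ σ, 0 ≤ g σ := fun σ => by
    have := (lam_pos σ).le; positivity
  have hgle : ∀ σ, g σ ≤ ∑' τ, g τ := fun σ => Summable.le_tsum hb σ (fun τ _ => hgnn τ)
  have hle : ∀ σ, f σ * g σ ≤ f σ * ∑' τ, g τ := fun σ =>
    mul_le_mul_of_nonneg_left (hgle σ) (hfnn σ)
  have hsum : Summable (fun σ => f σ * g σ) := by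
    apply Summable.of_nonneg_of_le (fun σ => mul_nonneg (hfnn σ) (hgnn σ)) hle
    exact ha.mul_right _
  have heq : (fun σ : Finset ℕ => lam σ ^ (-(2 * (2 * p))) * ‖a σ * b σ‖ ^ 2)
      = fun σ => f σ * g σ := funext fun σ => term_eq p a b σ
  refine ⟨heq ▸ hsum, ?_⟩
  rw [heq]
  calc ∑' σ, f σ * g σ ≤ ∑' σ, f σ * ∑' τ, g τ := Summable.tsum_le_tsum hle hsum (ha.mul_right _)
    _ = (∑' σ, f σ) * ∑' τ, g τ := tsum_mul_right
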